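/- If (r₊² + a²)z - aν = 0 (with z = ±1), then writing (r² + a²)z - aν = z(r² - r₊²), one has V_ν(r) = (r - r₊)(r + r₊)²/(r - r₋) on (r₊, ∞); in particular V_ν extends continuously to r₊ with V_ν(r₊) = 0, V_ν'(r₊) = (2r₊)²/(r₊ - r₋) > 0, and V_ν is strictly increasing on (r₊, ∞). -/

import Mathlib

/-- If `(r₊² + a²)z - aν = 0` (with `z = ±1`), then `(r² + a²)z - aν = z(r² - r₊²)` and
`V_ν(r) = (r - r₊)(r + r₊)²/(r - r₋)` on `(r₊, ∞)`; the latter extends continuously to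
`r₊` with value `0`, derivative `(2r₊)²/(r₊ - r₋) > 0` there, and is strictly
increasing on `(r₊, ∞)`. -/
theorem kerr_potential_degenerate_case (m a ν z : ℝ) (hm : 0 < m)
    (ha : -m < a ∧ a < m) (hz : z = 1 ∨ z = -1)
    (hν : a * ν = z * ((m + Real.sqrt (m ^ 2 - a ^ 2)) ^ 2 + a ^ 2)) :
    let rp : ℝ := m + Real.sqrt (m ^ 2 - a ^ 2)
    let rm : ℝ := m - Real.sqrt (m ^ 2 - a ^ 2)
    let W : ℝ → ℝ := fun r => (r - rp) * (r + rp) ^ 2 / (r - rm)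
    (∀ r : ℝ, (r ^ 2 + a ^ 2) * z - a * ν = z * (r ^ 2 - rp ^ 2)) ∧
    (∀ r : ℝ, rp < r →
      ((r ^ 2 + a ^ 2) * z - a * ν) ^ 2 / (r ^ 2 - 2 * m * r + a ^ 2) = W r) ∧
    W rp = 0 ∧
    deriv W rp = (2 * rp) ^ 2 / (rp - rm) ∧
    0 < deriv W rp ∧
    StrictMonoOn W (Set.Ioi rp) := by
  intro rp rm W
  set s := Real.sqrt (m ^ 2 - a ^ 2) with hsdef
  have hs2 : s ^ 2 = m ^ 2 - a ^ 2 := Real.sq_sqrt (by nlinarith [ha.1, ha.2])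
  have hs : 0 < s := by
    rw [hsdef]; exact Real.sqrt_pos.2 (by nlinarith [ha.1, ha.2])
  have hrp : rp = m + s := rfl
  have hrm : rm = m - s := rfl
  have hWfun : W = fun r => (r - rp) * (r + rp) ^ 2 / (r - rm) := rfl
  have hrpm : rm < rp := by rw [hrp, hrm]; linarith
  have hrp0 : 0 < rp := by rw [hrp]; linarith
  have hz2 : z ^ 2 = 1 := by rcases hz with h | h <;> rw [h] <;> norm_num
  -- Part 1
  have part1 : ∀ r : ℝ, (r ^ 2 + a ^ 2) * z - a * ν = z * (r ^ 2 - rp ^ 2) := by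
    intro r
    rw [hν, hrp]
    ring
  refine ⟨part1, ?_, ?_, ?_, ?_, ?_⟩
  -- derivative machinery (needed in several parts)
  all_goals
    have hWd : ∀ r : ℝ, r ≠ rm → HasDerivAt W
        (((((r + rp) ^ 2 + (r - rp) * (2 * (r + rp))) * (r - rm)
          - (r - rp) * (r + rp) ^ 2)) / (r - rm) ^ 2) r := by
      intro r hr
      have ha1 : HasDerivAt (fun x : ℝ => x - rp) 1 r := (hasDerivAt_id r).sub_const rp
      have ha2 : HasDerivAt (fun x : ℝ => (x + rp) ^ 2) (↑2 * (r + rp) ^ 1 * 1) r :=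
        ((hasDerivAt_id r).add_const rp).pow 2
      have h1 := ha1.mul ha2
      have h2 : HasDerivAt (fun x : ℝ => x - rm) 1 r := (hasDerivAt_id r).sub_const rm
      have h3 := h1.div h2 (sub_ne_zero.2 hr)
      simp only [Pi.div_def, Pi.mul_def] at h3
      rw [hWfun]
      refine h3.congr_deriv ?_
      ring
  · -- Part 2
    intro r hr
    have hden : r ^ 2 - 2 * m * r + a ^ 2 = (r - rp) * (r - rm) := by
      rw [hrp, hrm]; linear_combination hs2
    have hsqr : (z * (r ^ 2 - rp ^ 2)) ^ 2 = ((r - rp) * (r + rp)) ^ 2 := by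
      linear_combination (r ^ 2 - rp ^ 2) ^ 2 * hz2
    have hrne : r - rp ≠ 0 := sub_ne_zero.2 (ne_of_gt hr)
    have hrmne : r - rm ≠ 0 := sub_ne_zero.2 (by linarith : rm < r).ne'
    rw [part1 r, hden, hsqr, hWfun]
    field_simp
  · -- Part 3 : W rp = 0
    rw [hWfun]
    simp
  · -- Part 4 : deriv value
    have hne : rp ≠ rm := hrpm.ne'
    rw [(hWd rp hne).deriv]
    have h2s : rp - rm ≠ 0 := sub_ne_zero.2 hne
    field_simp
    ring
  · -- Part 5 : deriv positive
    have hne : rp ≠ rm := hrpm.ne'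
    rw [(hWd rp hne).deriv]
    apply div_pos
    · nlinarith [mul_pos (mul_pos hrp0 hrp0) (sub_pos.2 hrpm)]
    · exact pow_pos (sub_pos.2 hrpm) 2
  · -- Part 6 : strict monotonicity
    apply strictMonoOn_of_deriv_pos (convex_Ioi rp)
    · intro r hr
      have hne : r ≠ rm := by
        have : rp < r := hr
        exact (by linarith : rm < r).ne'
      exact (hWd r hne).differentiableAt.continuousAt.continuousWithinAt
    · intro r hr
      rw [interior_Ioi] at hr
      have hrr : rp < r := hr
      have hne : r ≠ rm := (by linarith : rm < r).ne'
      rw [(hWd r hne).deriv]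
      apply div_pos
      · have h1 : 0 < r - rp := by linarith
        have h2 : 0 < rp - rm := by linarith
        have h3 : 0 < r + rp := by linarith
        nlinarith [mul_pos h3 (mul_pos hrp0 h2),
          mul_pos h3 (mul_pos h1 (show (0:ℝ) < 2 * r + rp - 3 * rm by linarith))]
      · exact pow_pos (by linarith : (0:ℝ) < r - rm) 2
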